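/- Let Γ be a finite connected 3-valent simple graph whose full automorphism group acts transitively on the vertices. If there exist two distinct vertices u and u' of Γ with Γ(u) = Γ(u'), then Γ is isomorphic to the complete bipartite graph K_{3,3}. -/

import Mathlib

open SimpleGraph

noncomputable def fpr {V : Type*} (g : V → V) : ℚ :=
  (Nat.card {v : V // g v = v} : ℚ) / (Nat.card V : ℚ)

/-- The Praeger–Xu graph `C(r,s)`. -/
def praegerXu (r s : ℕ) : SimpleGraph (ZMod r × (Fin s → ZMod 2)) :=
  SimpleGraph.fromRel (fun a b =>
    b.1 = a.1 + 1 ∧ ∀ (i : Fin s) (h : (i : ℕ) + 1 < s), b.2 i = a.2 ⟨(i : ℕ) + 1, h⟩)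

/-- The Split Praeger–Xu graph `S(C(r,s))`; `1` plays the role of `+`, `0` of `−`. -/
def splitPraegerXu (r s : ℕ) : SimpleGraph ((ZMod r × (Fin s → ZMod 2)) × Fin 2) :=
  SimpleGraph.fromRel (fun a b => a.2 = 1 ∧ b.2 = 0 ∧
    (a.1 = b.1 ∨ (b.1.1 = a.1.1 + 1 ∧
      ∀ (i : Fin s) (h : (i : ℕ) + 1 < s), b.1.2 i = a.1.2 ⟨(i : ℕ) + 1, h⟩)))

def VertexTransitive {V : Type*} (Γ : SimpleGraph V) : Prop :=
  ∀ u v : V, ∃ e : Γ ≃g Γ, e u = v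

def EdgeTransitive {V : Type*} (Γ : SimpleGraph V) : Prop :=
  ∀ u v u' v' : V, Γ.Adj u v → Γ.Adj u' v' →
    ∃ e : Γ ≃g Γ, (e u = u' ∧ e v = v') ∨ (e u = v' ∧ e v = u')

def ArcTransitive {V : Type*} (Γ : SimpleGraph V) : Prop :=
  ∀ u v u' v' : V, Γ.Adj u v → Γ.Adj u' v' → ∃ e : Γ ≃g Γ, e u = u' ∧ e v = v'

-- exceptional graphs
def Psi1 : SimpleGraph (Fin 5) := ⊤

def Psi2 : SimpleGraph (Fin 5 × Fin 2) :=
  SimpleGraph.fromRel (fun a b => a.2 ≠ b.2 ∧ a.1 ≠ b.1)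

def Psi3 : SimpleGraph ({v : Fin 3 → ZMod 2 // v ≠ 0} × Fin 2) :=
  SimpleGraph.fromRel (fun a b => a.2 ≠ b.2 ∧ ∑ i, a.1.1 i * b.1.1 i ≠ 0)

instance : Fact (Nat.Prime 3) := ⟨by norm_num⟩

def Psi4 : SimpleGraph (Projectivization (ZMod 3) (Fin 3 → ZMod 3) × Fin 2) :=
  SimpleGraph.fromRel (fun a b => a.2 ≠ b.2 ∧ ∑ i, a.1.rep i * b.1.rep i = 0)

def kneser (n k : ℕ) : SimpleGraph {s : Finset (Fin n) // s.card = k} :=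
  SimpleGraph.fromRel (fun a b => Disjoint a.1 b.1)

def Psi5 : SimpleGraph {s : Finset (Fin 7) // s.card = 3} := kneser 7 3

def doubleCover {V : Type*} (G : SimpleGraph V) : SimpleGraph (V × Fin 2) :=
  SimpleGraph.fromRel (fun a b => a.2 ≠ b.2 ∧ G.Adj a.1 b.1)

def Psi6 := doubleCover Psi5

def Lambda1 : SimpleGraph (Fin 4) := ⊤
def Lambda2 : SimpleGraph (Fin 3 ⊕ Fin 3) := completeBipartiteGraph (Fin 3) (Fin 3)
def cubeGraph : SimpleGraph (Fin 3 → ZMod 2) :=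
  SimpleGraph.fromRel (fun a b => (Finset.univ.filter fun i => a i ≠ b i).card = 1)
def Lambda3 := cubeGraph
def Lambda4 : SimpleGraph {s : Finset (Fin 5) // s.card = 2} := kneser 5 2
def Lambda5 : SimpleGraph ({v : Fin 3 → ZMod 2 // v ≠ 0} × Fin 2) :=
  SimpleGraph.fromRel (fun a b => a.2 ≠ b.2 ∧ ∑ i, a.1.1 i * b.1.1 i = 0)
def Lambda6 := doubleCover Lambda4

-- tau, rho, sigma
def tauFun (r s : ℕ) (i : ZMod r) :
    ZMod r × (Fin s → ZMod 2) → ZMod r × (Fin s → ZMod 2) :=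
  fun a => (a.1, fun j => if a.1 + ((j : ℕ) : ZMod r) = i then a.2 j + 1 else a.2 j)

lemma tauFun_involutive (r s : ℕ) (i : ZMod r) : Function.Involutive (tauFun r s i) := by
  intro a
  unfold tauFun
  refine Prod.ext rfl ?_
  funext j
  by_cases h : a.1 + ((j : ℕ) : ZMod r) = i
  · simp only [h, if_pos]
    rw [add_assoc, show (1 : ZMod 2) + 1 = 0 from rfl, add_zero]
  · simp [h]

/-- The permutation `τ_i` of the vertices of `C(r,s)`. -/
def tauPerm (r s : ℕ) (i : ZMod r) : Equiv.Perm (ZMod r × (Fin s → ZMod 2)) :=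
  (tauFun_involutive r s i).toPerm

def rhoPerm (r s : ℕ) : Equiv.Perm (ZMod r × (Fin s → ZMod 2)) :=
  (Equiv.addRight (1 : ZMod r)).prodCongr (Equiv.refl _)

def sigmaFun (r s : ℕ) :
    ZMod r × (Fin s → ZMod 2) → ZMod r × (Fin s → ZMod 2) :=
  fun a => (1 - (s : ZMod r) - a.1, fun j => a.2 j.rev)

lemma sigmaFun_involutive (r s : ℕ) : Function.Involutive (sigmaFun r s) := by
  intro a
  unfold sigmaFun
  refine Prod.ext ?_ ?_
  · simp only
    ring
  · funext j
    simp [Fin.rev_rev]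

def sigmaPerm (r s : ℕ) : Equiv.Perm (ZMod r × (Fin s → ZMod 2)) :=
  (sigmaFun_involutive r s).toPerm

/-- The group `K = ⟨τ_i : i ∈ ZMod r⟩`. -/
def pxK (r s : ℕ) : Subgroup (Equiv.Perm (ZMod r × (Fin s → ZMod 2))) :=
  Subgroup.closure (Set.range (tauPerm r s))

/-- The group `H = ⟨K, ρ, σ⟩`. -/
def pxH (r s : ℕ) : Subgroup (Equiv.Perm (ZMod r × (Fin s → ZMod 2))) :=
  Subgroup.closure (Set.range (tauPerm r s) ∪ {rhoPerm r s, sigmaPerm r s})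

/-- Quotient graph of `Γ` by the orbits of a group action. -/
def quotGraph {V : Type*} (G : Type*) [Group G] [MulAction G V] (Γ : SimpleGraph V) :
    SimpleGraph (MulAction.orbitRel.Quotient G V) :=
  SimpleGraph.fromRel (fun a b => ∃ u v : V,
    (Quotient.mk (MulAction.orbitRel G V) u : MulAction.orbitRel.Quotient G V) = a ∧
    (Quotient.mk (MulAction.orbitRel G V) v : MulAction.orbitRel.Quotient G V) = b ∧
    Γ.Adj u v)


/-- Lemma 4.2: a connected 3-valent vertex-transitive graph with two distinct vertices
having the same neighbourhood is isomorphic to `K_{3,3}`. -/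
theorem statement15 {V : Type*} [Fintype V] (Γ : SimpleGraph V)
    (hconn : Γ.Connected) (hval : ∀ v : V, Nat.card (Γ.neighborSet v) = 3)
    (hvt : VertexTransitive Γ)
    (u u' : V) (huu' : u ≠ u') (hnbr : Γ.neighborSet u = Γ.neighborSet u') :
    Nonempty (Γ ≃g completeBipartiteGraph (Fin 3) (Fin 3)) := by
  classical
  set C : V → Set V := fun v => {w | Γ.neighborSet w = Γ.neighborSet v} with hC
  set A : Set V := Γ.neighborSet u with hA
  set B : Set V := C u with hB
  have hval' : ∀ v : V, (Γ.neighborSet v).ncard = 3 := by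
    intro v; rw [← Nat.card_coe_set_eq]; exact hval v
  -- twin classes all have the same size
  have hclass : ∀ v : V, (C v).ncard = (C u).ncard := by
    intro v
    obtain ⟨e, he⟩ := hvt u v
    have himg : ∀ w : V, Γ.neighborSet (e w) = (e : V → V) '' Γ.neighborSet w := by
      intro w
      ext x
      constructor
      · intro hx
        refine ⟨e.symm x, ?_, by simp⟩
        have hx' : Γ.Adj (e w) (e (e.symm x)) := by simpa using hx
        exact e.map_adj_iff.mp hx'
      · rintro ⟨y, hy, rfl⟩
        exact e.map_adj_iff.mpr hy
    have hmem : ∀ w : V, w ∈ C u ↔ (e w : V) ∈ C v := by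
      intro w
      simp only [hC, Set.mem_setOf_eq]
      rw [← he, himg w, himg u]
      constructor
      · intro h; rw [h]
      · intro h
        exact (Set.image_injective.mpr (RelIso.injective e)) h
    have himgC : C v = (e : V → V) '' C u := by
      ext x
      constructor
      · intro hx
        refine ⟨e.symm x, ?_, by simp⟩
        rw [hmem]
        simpa using hx
      · rintro ⟨y, hy, rfl⟩
        exact (hmem y).mp hy
    rw [himgC, Set.ncard_image_of_injective _ (RelIso.injective e)]
  have hcardA : A.ncard = 3 := hval' u
  have hAne : A.Nonempty := by
    apply Set.nonempty_of_ncard_ne_zero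
    omega
  have hu'B : u' ∈ B := by
    simp only [hB, hC, Set.mem_setOf_eq]
    exact hnbr.symm
  have huB : u ∈ B := by simp [hB, hC]
  have htwo : 2 ≤ B.ncard := by
    have h1 : 1 < B.ncard := (Set.one_lt_ncard (B.toFinite)).mpr ⟨u, huB, u', hu'B, huu'⟩
    omega
  -- B ⊆ N a for a ∈ A
  have hBsub : ∀ a ∈ A, B ⊆ Γ.neighborSet a := by
    intro a ha b hb
    simp only [hB, hC, Set.mem_setOf_eq] at hb
    have : a ∈ Γ.neighborSet b := by rw [hb]; exact ha
    exact (Γ.adj_comm b a).mp this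
  -- twin class of a ∈ A is inside A
  have hCsub : ∀ a ∈ A, C a ⊆ A := by
    intro a ha w hw
    simp only [hC, Set.mem_setOf_eq] at hw
    have hu : u ∈ Γ.neighborSet a := (Γ.adj_comm u a).mp ha
    have : u ∈ Γ.neighborSet w := by rw [hw]; exact hu
    exact (Γ.adj_comm w u).mp this
  -- the common value of |C v| is 3
  have hcardB : B.ncard = 3 := by
    obtain ⟨a, ha⟩ := hAne
    have hle : B.ncard ≤ 3 := by
      rw [← hval' a]
      exact Set.ncard_le_ncard (hBsub a ha) (Set.toFinite _)
    rcases Nat.lt_or_ge B.ncard 3 with hlt | hge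
    · exfalso
      have hCa : (C a).ncard = B.ncard := hclass a
      have hlt' : (C a).ncard < A.ncard := by omega
      obtain ⟨c, hcA, hcCa⟩ := Set.exists_mem_notMem_of_ncard_lt_ncard hlt' (Set.toFinite _)
      have hdisj : Disjoint (C a) (C c) := by
        rw [Set.disjoint_left]
        intro x hxa hxc
        simp only [hC, Set.mem_setOf_eq] at hxa hxc
        exact hcCa (by simp only [hC, Set.mem_setOf_eq]; rw [← hxc, hxa])
      have hsub : C a ∪ C c ⊆ A := Set.union_subset (hCsub a ha) (hCsub c hcA)
      have hcard : (C a ∪ C c).ncard = (C a).ncard + (C c).ncard :=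
        Set.ncard_union_eq hdisj (Set.toFinite _) (Set.toFinite _)
      have hle' : (C a ∪ C c).ncard ≤ 3 := hcardA ▸ Set.ncard_le_ncard hsub (Set.toFinite _)
      have hCc : (C c).ncard = B.ncard := hclass c
      omega
    · omega
  -- neighborhoods
  have hNA : ∀ a ∈ A, Γ.neighborSet a = B := by
    intro a ha
    exact (Set.eq_of_subset_of_ncard_le (hBsub a ha)
      (by rw [hval' a, hcardB]) (Set.toFinite _)).symm
  have hNB : ∀ b ∈ B, Γ.neighborSet b = A := by
    intro b hb
    simpa only [hA, hB, hC, Set.mem_setOf_eq] using hb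
  -- A and B are disjoint
  have hABdisj : ∀ v : V, v ∈ A → v ∈ B → False := by
    intro v hvA hvB
    have : v ∈ Γ.neighborSet v := by
      rw [hNB v hvB]; exact hvA
    exact Γ.irrefl this
  -- coverage
  have hcover : ∀ v : V, v ∈ B ∨ v ∈ A := by
    have key : ∀ x v : V, Γ.Walk x v → (x ∈ B ∨ x ∈ A) → (v ∈ B ∨ v ∈ A) := by
      intro x v p
      induction p with
      | nil => exact id
      | cons h p ih =>
        rename_i x' y' v' 
        intro hx
        apply ih
        rcases hx with hx | hx
        · right
          have : y' ∈ Γ.neighborSet x' := h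
          rwa [hNB x' hx] at this
        · left
          have : y' ∈ Γ.neighborSet x' := h
          rwa [hNA x' hx] at this
    intro v
    obtain ⟨p⟩ := (hconn.preconnected u v)
    exact key u v p (Or.inl huB)
  -- build the isomorphism
  have hfinB : Fintype ↥B := Fintype.ofFinite _
  have hfinA : Fintype ↥A := Fintype.ofFinite _
  have hcB : Fintype.card ↥B = 3 := by
    rw [← Nat.card_eq_fintype_card, Nat.card_coe_set_eq, hcardB]
  have hcA : Fintype.card ↥A = 3 := by
    rw [← Nat.card_eq_fintype_card, Nat.card_coe_set_eq, hcardA]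
  let eB : ↥B ≃ Fin 3 := Fintype.equivFinOfCardEq hcB
  let eA : ↥A ≃ Fin 3 := Fintype.equivFinOfCardEq hcA
  let φ : V → Fin 3 ⊕ Fin 3 := fun v =>
    if h : v ∈ B then Sum.inl (eB ⟨v, h⟩) else Sum.inr (eA ⟨v, (hcover v).resolve_left h⟩)
  let ψ : Fin 3 ⊕ Fin 3 → V :=
    Sum.elim (fun i => ((eB.symm i : ↥B) : V)) (fun i => ((eA.symm i : ↥A) : V))
  have hleft : Function.LeftInverse ψ φ := by
    intro v
    by_cases h : v ∈ B
    · simp [φ, ψ, h]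
    · simp [φ, ψ, h]
  have hright : Function.RightInverse ψ φ := by
    rintro (i | i)
    · have hmem : ((eB.symm i : ↥B) : V) ∈ B := (eB.symm i).2
      simp only [φ, ψ, Sum.elim_inl, dif_pos hmem]
      rw [Subtype.coe_eta, Equiv.apply_symm_apply]
    · have hmem : ((eA.symm i : ↥A) : V) ∈ A := (eA.symm i).2
      have hnot : ((eA.symm i : ↥A) : V) ∉ B := fun h => hABdisj _ hmem h
      simp only [φ, ψ, Sum.elim_inr, dif_neg hnot]
      rw [Subtype.coe_eta, Equiv.apply_symm_apply]
  refine ⟨⟨⟨φ, ψ, hleft, hright⟩, ?_⟩⟩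
  intro a b
  simp only [Equiv.coe_fn_mk, completeBipartiteGraph_adj]
  by_cases ha : a ∈ B <;> by_cases hb : b ∈ B
  · simp only [φ, dif_pos ha, dif_pos hb, Sum.isLeft_inl, Sum.isRight_inl]
    constructor
    · rintro (⟨-, h⟩ | ⟨h, -⟩) <;> exact absurd h (by simp)
    · intro hadj
      exfalso
      have : b ∈ Γ.neighborSet a := hadj
      rw [hNB a ha] at this
      exact hABdisj b this hb
  · have hbA : b ∈ A := (hcover b).resolve_left hb
    simp only [φ, dif_pos ha, dif_neg hb, Sum.isLeft_inl, Sum.isRight_inr,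
      Sum.isRight_inl, Sum.isLeft_inr]
    constructor
    · intro _
      have : b ∈ Γ.neighborSet a := by rw [hNB a ha]; exact hbA
      exact this
    · intro _; tauto
  · have haA : a ∈ A := (hcover a).resolve_left ha
    simp only [φ, dif_neg ha, dif_pos hb, Sum.isLeft_inl, Sum.isRight_inr,
      Sum.isRight_inl, Sum.isLeft_inr]
    constructor
    · intro _
      have : b ∈ Γ.neighborSet a := by rw [hNA a haA]; exact hb
      exact this
    · intro _; tauto
  · have haA : a ∈ A := (hcover a).resolve_left ha
    simp only [φ, dif_neg ha, dif_neg hb, Sum.isLeft_inr, Sum.isRight_inr]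
    constructor
    · rintro (⟨h, -⟩ | ⟨-, h⟩) <;> exact absurd h (by simp)
    · intro hadj
      exfalso
      have : b ∈ Γ.neighborSet a := hadj
      rw [hNA a haA] at this
      exact hb this
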